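/- Let m ∈ ℤ, let λ ∈ ℂ with |λ| = 1, and let f: {ζ ∈ ℂ : |ζ| ≤ 1} → ℂ be continuous on the closed unit disc and holomorphic on the open unit disc, such that f(ζ) = λ · ζ^m · conj(f(ζ)) for every ζ with |ζ| = 1. If m < 0, then f is identically zero. If m ≥ 0, then f is a polynomial of degree at most m, f(ζ) = Σ_{ℓ=0}^{m} a_ℓ ζ^ℓ, whose coefficients satisfy a_ℓ = λ · conj(a_{m−ℓ}) for all 0 ≤ ℓ ≤ m; in particular, if f(1) = f'(1) = ⋯ = f^{(m)}(1) = 0 then f is identically zero. -/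

import Mathlib

open ComplexConjugate

noncomputable section

open Complex Metric Set Filter Polynomial MeasureTheory Topology

lemma myconj {f : ℝ → ℂ} {a b : ℝ} : (∫ x in a..b, conj (f x)) = conj (∫ x in a..b, f x) := by
  rw [intervalIntegral.intervalIntegral_eq_integral_uIoc, intervalIntegral.intervalIntegral_eq_integral_uIoc,
    integral_conj]
  split_ifs <;> simp

lemma extcb {f g : ℂ → ℂ} (hf : ContinuousOn f (closedBall 0 1))
    (hg : Continuous g) (h : ∀ ζ ∈ ball (0:ℂ) 1, f ζ = g ζ) :
    ∀ ζ ∈ closedBall (0:ℂ) 1, f ζ = g ζ := by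
  intro ζ hζ
  have hcl : ζ ∈ closure (ball (0:ℂ) 1) := by
    rw [closure_ball (0:ℂ) one_ne_zero]; exact hζ
  have hne : (𝓝[ball (0:ℂ) 1] ζ).NeBot := mem_closure_iff_nhdsWithin_neBot.mp hcl
  have h1 : Tendsto f (𝓝[ball (0:ℂ) 1] ζ) (𝓝 (f ζ)) :=
    (hf ζ hζ).mono ball_subset_closedBall
  have h2 : Tendsto f (𝓝[ball (0:ℂ) 1] ζ) (𝓝 (g ζ)) := by
    refine Tendsto.congr' ?_ ((hg.tendsto ζ).mono_left nhdsWithin_le_nhds)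
    filter_upwards [self_mem_nhdsWithin] with x hx
    exact (h x hx).symm
  exact tendsto_nhds_unique h1 h2

noncomputable def cInt (f : ℂ → ℂ) (n : ℤ) : ℂ :=
  ∫ θ in (0:ℝ)..(2*Real.pi), f (Complex.exp (θ * I)) * Complex.exp (-(n:ℂ) * (θ * I))

lemma hsym (m : ℤ) (l : ℂ) (f : ℂ → ℂ)
    (hrefl : ∀ ζ : ℂ, ‖ζ‖ = 1 → f ζ = l * ζ ^ m * conj (f ζ)) (n : ℤ) :
    cInt f n = l * conj (cInt f (m - n)) := by
  have key : ∀ θ : ℝ, f (Complex.exp (θ * I)) * Complex.exp (-(n:ℂ) * (θ * I))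
      = l * conj (f (Complex.exp (θ * I)) * Complex.exp (-((m - n : ℤ):ℂ) * (θ * I))) := by
    intro θ
    have hθ : ‖Complex.exp ((θ:ℂ) * I)‖ = 1 := by
      simp [Complex.norm_exp_ofReal_mul_I]
    have hr := hrefl _ hθ
    have hz : (Complex.exp ((θ:ℂ) * I)) ^ m = Complex.exp ((m:ℂ) * (θ * I)) :=
      (Complex.exp_int_mul _ m).symm
    have hc : conj (Complex.exp (-((m - n : ℤ):ℂ) * (θ * I)))
        = Complex.exp (((m - n : ℤ):ℂ) * (θ * I)) := by
      rw [← Complex.exp_conj]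
      congr 1
      simp
      ring
    have hexp : Complex.exp (((m - n : ℤ):ℂ) * (θ * I))
        = Complex.exp ((m:ℂ) * (θ * I)) * Complex.exp (-(n:ℂ) * (θ * I)) := by
      rw [← Complex.exp_add]; congr 1; push_cast; ring
    rw [map_mul, hc, hexp, ← hz]
    linear_combination Complex.exp (-(n:ℂ) * (θ * I)) * hr
  calc cInt f n = ∫ θ in (0:ℝ)..(2*Real.pi),
        l * conj (f (Complex.exp (θ * I)) * Complex.exp (-((m - n : ℤ):ℂ) * (θ * I))) :=
        intervalIntegral.integral_congr (fun θ _ => key θ)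
    _ = l * ∫ θ in (0:ℝ)..(2*Real.pi),
        conj (f (Complex.exp (θ * I)) * Complex.exp (-((m - n : ℤ):ℂ) * (θ * I))) :=
        intervalIntegral.integral_const_mul _ _
    _ = l * conj (cInt f (m - n)) := by rw [myconj]; rfl

lemma hcirc (f : ℂ → ℂ) (n : ℤ) :
    (∮ z in C(0,1), z ^ (-n-1) • f z) = I * cInt f n := by
  rw [circleIntegral]
  rw [show (I * cInt f n) = ∫ θ in (0:ℝ)..(2*Real.pi),
      I * (f (Complex.exp (θ * I)) * Complex.exp (-(n:ℂ) * (θ * I))) from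
    (intervalIntegral.integral_const_mul _ _).symm]
  refine intervalIntegral.integral_congr fun θ _ => ?_
  have h1 : circleMap 0 1 θ = Complex.exp (θ * I) := by simp [circleMap]
  have h2 : deriv (circleMap 0 1) θ = Complex.exp (θ * I) * I := by
    rw [deriv_circleMap, h1]
  have h3 : (Complex.exp ((θ:ℂ) * I)) ^ (-n-1) = Complex.exp (((-n-1 : ℤ):ℂ) * (θ * I)) :=
    (Complex.exp_int_mul _ _).symm
  rw [h2, h1, smul_eq_mul, smul_eq_mul, h3]
  have h4 : Complex.exp ((θ:ℂ) * I) * Complex.exp (((-n-1 : ℤ):ℂ) * (θ * I))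
      = Complex.exp (-(n:ℂ) * (θ * I)) := by
    rw [← Complex.exp_add]; congr 1; push_cast; ring
  calc Complex.exp (θ * I) * I * (Complex.exp (((-n-1 : ℤ):ℂ) * (θ * I)) * f (Complex.exp (θ * I)))
      = I * ((Complex.exp ((θ:ℂ) * I) * Complex.exp (((-n-1 : ℤ):ℂ) * (θ * I))) * f (Complex.exp (θ * I))) := by ring
    _ = _ := by rw [h4]; ring

lemma hzero (f : ℂ → ℂ) (hcont : ContinuousOn f (closedBall 0 1))
    (hdiff : DifferentiableOn ℂ f (ball 0 1)) (n : ℤ) (hn : n < 0) : cInt f n = 0 := by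
  set k : ℕ := (-n-1).toNat with hk
  have hk' : (-n-1 : ℤ) = (k : ℤ) := by omega
  have h1 : (∮ z in C(0,1), z ^ (-n-1) • f z) = ∮ z in C(0,1), z ^ k • f z := by
    rw [hk']; simp_rw [zpow_natCast]
  have h2 : (∮ z in C(0,1), z ^ k • f z) = 0 := by
    refine circleIntegral_eq_zero_of_differentiable_on_off_countable zero_le_one
      (s := ∅) countable_empty (((continuous_pow k).continuousOn).smul hcont) ?_
    intro z hz
    exact ((differentiableAt_pow k).smul
      ((hdiff z hz.1).differentiableAt (isOpen_ball.mem_nhds hz.1)))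
  have := (hcirc f n)
  rw [h1, h2] at this
  have hI : (I : ℂ) ≠ 0 := I_ne_zero
  field_simp at this
  exact (mul_eq_zero.mp this.symm).resolve_left hI

lemma hps (f : ℂ → ℂ) (hcont : ContinuousOn f (closedBall 0 1))
    (hdiff : DifferentiableOn ℂ f (ball 0 1)) :
    HasFPowerSeriesOnBall f (cauchyPowerSeries f 0 1) 0 1 := by
  have := Complex.hasFPowerSeriesOnBall_of_differentiable_off_countable (R := 1) (c := (0:ℂ))
    (f := f) (s := ∅) countable_empty (by simpa using hcont)
    (fun z hz => (hdiff z (by simpa using hz.1)).differentiableAt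
      (isOpen_ball.mem_nhds (by simpa using hz.1))) one_pos
  simpa using this

lemma hcoef (f : ℂ → ℂ) (n : ℕ) (ζ : ℂ) :
    (cauchyPowerSeries f 0 1 n fun _ => ζ) = ((2*(Real.pi:ℂ))⁻¹ * cInt f n) * ζ ^ n := by
  rw [cauchyPowerSeries_apply]
  have h1 : (∮ z in C(0,1), (ζ / (z - 0)) ^ n • (z - 0)⁻¹ • f z)
      = ∮ z in C(0,1), ζ ^ n * (z ^ (-(n:ℤ)-1) • f z) := by
    refine circleIntegral.integral_congr zero_le_one fun z hz => ?_
    have hz0 : z ≠ 0 := by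
      intro h; rw [mem_sphere_zero_iff_norm] at hz; rw [h] at hz; simp at hz
    rw [sub_zero, smul_eq_mul, smul_eq_mul, smul_eq_mul, div_pow, div_eq_mul_inv]
    rw [← zpow_natCast z n, ← zpow_neg, ← zpow_neg_one z]
    rw [show ζ ^ n * z ^ (-(n:ℤ)) * (z ^ (-1:ℤ) * f z)
        = ζ ^ n * ((z ^ (-(n:ℤ)) * z ^ (-1:ℤ)) * f z) from by ring, ← zpow_add₀ hz0,
      show -(n:ℤ) + -1 = -(n:ℤ) - 1 from by ring]
  rw [h1, circleIntegral.integral_const_mul, hcirc, smul_eq_mul]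
  have hπ : (Real.pi : ℂ) ≠ 0 := by exact_mod_cast Real.pi_ne_zero
  field_simp

lemma hsumA (f : ℂ → ℂ) (hcont : ContinuousOn f (closedBall 0 1))
    (hdiff : DifferentiableOn ℂ f (ball 0 1)) (ζ : ℂ) (hζ : ‖ζ‖ < 1) :
    HasSum (fun n : ℕ => ((2*(Real.pi:ℂ))⁻¹ * cInt f n) * ζ ^ n) (f ζ) := by
  have hmem : ζ ∈ EMetric.ball (0:ℂ) 1 := by
    change ζ ∈ Metric.eball (0:ℂ) 1; rw [Metric.mem_eball, edist_zero_right, ← ofReal_norm, ENNReal.ofReal_lt_one]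
    exact_mod_cast hζ
  have h := (hps f hcont hdiff).hasSum hmem
  rw [zero_add] at h
  have he : (fun n : ℕ => cauchyPowerSeries f 0 1 n fun _ => ζ)
      = fun n : ℕ => ((2*(Real.pi:ℂ))⁻¹ * cInt f n) * ζ ^ n := funext fun n => hcoef f n ζ
  rwa [he] at h

lemma jetzero (p : ℂ[X]) (N : ℕ) (hdeg : p.natDegree ≤ N)
    (hj : ∀ j ≤ N, ((fun r : Polynomial ℂ => Polynomial.derivative r)^[j] p).eval 1 = 0) :
    p = 0 := by
  have key : Polynomial.taylor 1 p = 0 := by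
    ext k
    simp only [Polynomial.coeff_zero]
    by_cases hk : k ≤ N
    · rw [Polynomial.taylor_coeff]
      have h2 : (Nat.factorial k) • (Polynomial.hasseDeriv k p) = (⇑Polynomial.derivative)^[k] p := by
        have := congrFun (Polynomial.factorial_smul_hasseDeriv (R := ℂ) k) p
        simpa using this
      have h3 : ((⇑Polynomial.derivative)^[k] p).eval 1 = 0 := hj k hk
      have h4 := congrArg (Polynomial.eval (1:ℂ)) h2
      rw [h3, nsmul_eq_mul, Polynomial.eval_mul, Polynomial.eval_natCast] at h4
      have hfac : ((Nat.factorial k) : ℂ) ≠ 0 := by exact_mod_cast Nat.factorial_ne_zero k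
      exact (mul_eq_zero.mp h4).resolve_left hfac
    · refine Polynomial.coeff_eq_zero_of_natDegree_lt ?_
      rw [Polynomial.natDegree_taylor]
      omega
  exact Polynomial.taylor_injective (1:ℂ) (by simp [key])

theorem stmt12 (m : ℤ) (l : ℂ) (hl : ‖l‖ = 1) (f : ℂ → ℂ)
    (hcont : ContinuousOn f (Metric.closedBall 0 1))
    (hdiff : DifferentiableOn ℂ f (Metric.ball 0 1))
    (hrefl : ∀ ζ : ℂ, ‖ζ‖ = 1 → f ζ = l * ζ ^ m * conj (f ζ)) :
    (m < 0 → ∀ ζ ∈ Metric.closedBall (0 : ℂ) 1, f ζ = 0) ∧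
    (0 ≤ m → ∃ p : Polynomial ℂ,
      p.natDegree ≤ m.toNat ∧
      (∀ ℓ ≤ m.toNat, p.coeff ℓ = l * conj (p.coeff (m.toNat - ℓ))) ∧
      (∀ ζ ∈ Metric.closedBall (0 : ℂ) 1, f ζ = p.eval ζ) ∧
      ((∀ j ≤ m.toNat,
          ((fun r : Polynomial ℂ => Polynomial.derivative r)^[j] p).eval 1 = 0) →
        ∀ ζ ∈ Metric.closedBall (0 : ℂ) 1, f ζ = 0)) := by
  constructor
  · intro hm ζ hζ
    have hA0 : ∀ n : ℕ, (2*(Real.pi:ℂ))⁻¹ * cInt f n = 0 := by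
      intro n
      rw [hsym m l f hrefl n, hzero f hcont hdiff (m - n) (by omega)]
      simp
    have hball : ∀ ζ ∈ ball (0:ℂ) 1, f ζ = 0 := by
      intro ζ hζ
      have h := hsumA f hcont hdiff ζ (mem_ball_zero_iff.mp hζ)
      simp only [hA0, zero_mul] at h
      exact h.unique hasSum_zero
    exact extcb hcont continuous_const hball ζ hζ
  · intro hm
    set N := m.toNat with hN
    have hmN : m = (N:ℤ) := (Int.toNat_of_nonneg hm).symm
    set A : ℕ → ℂ := fun n => (2*(Real.pi:ℂ))⁻¹ * cInt f n with hA
    have hAz : ∀ n : ℕ, N < n → A n = 0 := by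
      intro n hn
      rw [hA]; dsimp only
      rw [hsym m l f hrefl n, hzero f hcont hdiff (m - n) (by omega), map_zero, mul_zero, mul_zero]
    set p : ℂ[X] := ∑ ℓ ∈ Finset.range (N+1), Polynomial.C (A ℓ) * Polynomial.X ^ ℓ with hp
    have hcoeff : ∀ k : ℕ, p.coeff k = if k ≤ N then A k else 0 := by
      intro k
      rw [hp, Polynomial.finset_sum_coeff]
      have he : ∀ ℓ ∈ Finset.range (N+1),
          (Polynomial.C (A ℓ) * Polynomial.X ^ ℓ).coeff k = if ℓ = k then A ℓ else 0 := by
        intro ℓ _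
        simp [Polynomial.coeff_C_mul, Polynomial.coeff_X_pow, eq_comm]
      rw [Finset.sum_congr rfl he, Finset.sum_ite_eq' (Finset.range (N+1)) k A]
      simp [Nat.lt_succ_iff]
    have hdeg : p.natDegree ≤ N := by
      rw [Polynomial.natDegree_le_iff_coeff_eq_zero]
      intro k hk
      rw [hcoeff k, if_neg (by omega)]
    have hev : ∀ ζ ∈ ball (0:ℂ) 1, f ζ = p.eval ζ := by
      intro ζ hζ
      have h := hsumA f hcont hdiff ζ (mem_ball_zero_iff.mp hζ)
      have h2 : HasSum (fun n : ℕ => A n * ζ ^ n) (∑ n ∈ Finset.range (N+1), A n * ζ ^ n) :=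
        hasSum_sum_of_ne_finset_zero (by
          intro b hb
          rw [hAz b (by simpa using hb), zero_mul])
      have h3 := h.unique h2
      rw [h3, hp]
      simp [Polynomial.eval_finset_sum]
    have hevc : ∀ ζ ∈ closedBall (0:ℂ) 1, f ζ = p.eval ζ :=
      extcb hcont p.continuous hev
    refine ⟨p, hdeg, ?_, hevc, ?_⟩
    · intro ℓ hℓ
      rw [hcoeff ℓ, if_pos hℓ, hcoeff (N - ℓ), if_pos (Nat.sub_le _ _)]
      rw [hA]; dsimp only
      rw [hsym m l f hrefl ℓ, show (m - ℓ : ℤ) = ((N - ℓ : ℕ) : ℤ) from by omega, map_mul]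
      have hc2 : conj ((2*(Real.pi:ℂ))⁻¹) = (2*(Real.pi:ℂ))⁻¹ := by
        simp [map_inv₀, map_mul, Complex.conj_ofReal, map_ofNat]
      rw [hc2]
      ring
    · intro hj ζ hζ
      rw [hevc ζ hζ, jetzero p N hdeg hj]
      simp
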